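/- Let f : ℍ → ℂ be given by an absolutely convergent series f(z) = ∑_{m≥1} a_m e^{2πimz} with |a_m| ≤ C m^M. Then for Re(s) > M+1, ∫_0^∞ f(it) t^{s-1} dt = Γ(s) (2π)^{-s} ∑_{m≥1} a_m m^{-s}, with both sides converging absolutely. -/

import Mathlib

open scoped BigOperators

open Filter Topology Real Set MeasureTheory
open Complex

private lemma integrable_tsum_aux {ι α : Type*} [Countable ι] [MeasurableSpace α]
    {μ : MeasureTheory.Measure α} {E : Type*} [NormedAddCommGroup E]
    [CompleteSpace E] {F : ι → α → E} (hF_int : ∀ i, Integrable (F i) μ)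
    (hF_sum : Summable fun i => ∫ a, ‖F i a‖ ∂μ) :
    Integrable (fun a => ∑' i, F i a) μ := by
  have hf' : ∑' i, ∫⁻ a, ‖F i a‖₊ ∂μ ≠ ⊤ := by
    have h1 (i : ι) : ∫⁻ a, ‖F i a‖₊ ∂μ = ‖(∫ a, ‖F i a‖ ∂μ)‖₊ := by
      rw [lintegral_coe_eq_integral _ (hF_int i).norm, ENNReal.coe_nnreal_eq, coe_nnnorm,
        Real.norm_of_nonneg (integral_nonneg fun a => norm_nonneg _)]
      simp only [coe_nnnorm]
    rw [funext h1, ← ENNReal.coe_tsum]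
    · exact ENNReal.coe_ne_top
    · simp_rw [← NNReal.summable_coe, coe_nnnorm]
      exact hF_sum.abs
  have hmeas : ∀ i, AEMeasurable (fun a => (‖F i a‖₊ : ENNReal)) μ :=
    fun i => (hF_int i).1.enorm
  have hhh : ∀ᵐ a ∂μ, Summable fun i => (‖F i a‖₊ : ℝ) := by
    rw [← lintegral_tsum hmeas] at hf'
    refine (ae_lt_top' (AEMeasurable.ennreal_tsum hmeas) hf').mono fun a ha => ?_
    rw [← ENNReal.tsum_coe_ne_top_iff_summable_coe]
    exact ha.ne
  have hsm : AEStronglyMeasurable (fun a => ∑' i, F i a) μ := by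
    refine aestronglyMeasurable_of_tendsto_ae (atTop : Filter (Finset ι))
      (f := fun s a => ∑ i ∈ s, F i a)
      (fun s => Finset.aestronglyMeasurable_fun_sum _ fun i _ => (hF_int i).1) ?_
    filter_upwards [hhh] with a ha
    have : Summable fun i => F i a := by
      apply Summable.of_norm
      simpa only [coe_nnnorm] using ha
    exact this.hasSum
  refine ⟨hsm, ?_⟩
  have hb : ∫⁻ a, ‖∑' i, F i a‖₊ ∂μ ≤ ∑' i, ∫⁻ a, ‖F i a‖₊ ∂μ := by
    rw [← lintegral_tsum hmeas]
    refine lintegral_mono_ae ?_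
    filter_upwards [hhh] with a ha
    have hsummable : Summable fun i => ‖F i a‖₊ := by
      rw [← NNReal.summable_coe]; exact ha
    calc (‖∑' i, F i a‖₊ : ENNReal)
        ≤ ((∑' i, ‖F i a‖₊ : NNReal) : ENNReal) :=
          ENNReal.coe_le_coe.2 (nnnorm_tsum_le hsummable)
      _ = ∑' i, (‖F i a‖₊ : ENNReal) := ENNReal.coe_tsum hsummable
  exact lt_of_le_of_lt hb hf'.lt_top

private lemma mellin_integrable_aux {ι : Type*} [Countable ι] {a : ι → ℂ} {p : ι → ℝ}
    {F : ℝ → ℂ} {s : ℂ}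
    (hp : ∀ i, a i = 0 ∨ 0 < p i) (hs : 0 < s.re)
    (hF : ∀ t ∈ Set.Ioi (0:ℝ), HasSum (fun i => a i * Real.exp (-p i * t)) (F t))
    (h_sum : Summable fun i => ‖a i‖ / (p i) ^ s.re) :
    MeasureTheory.IntegrableOn (fun t : ℝ => (t:ℂ) ^ (s-1) * F t) (Set.Ioi 0) := by
  have hint : ∀ i, IntegrableOn
      (fun t : ℝ => (t:ℂ) ^ (s-1) * (a i * Real.exp (-p i * t))) (Ioi 0) := by
    intro i
    rcases hp i with hai | hpi
    · simpa only [hai, zero_mul, mul_zero] using integrableOn_zero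
    simp_rw [← mul_assoc, mul_comm _ (a i), mul_assoc]
    have := Complex.GammaIntegral_convergent hs
    rw [← mul_zero (p i), ← integrableOn_Ioi_comp_mul_left_iff _ _ hpi] at this
    refine (IntegrableOn.congr_fun (this.const_mul (1 / (p i : ℂ) ^ (s - 1)))
      (fun t (ht : 0 < t) => ?_) measurableSet_Ioi).const_mul _
    simp_rw [mul_comm (↑(rexp _) : ℂ), ← mul_assoc, neg_mul, ofReal_mul]
    rw [mul_cpow_ofReal_nonneg hpi.le ht.le, ← mul_assoc, one_div, inv_mul_cancel₀, one_mul]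
    rw [Ne, cpow_eq_zero_iff, not_and_or]
    exact Or.inl (ofReal_ne_zero.mpr hpi.ne')
  have hsum2 : Summable fun i =>
      ∫ t in Ioi (0:ℝ), ‖(t:ℂ) ^ (s-1) * (a i * Real.exp (-p i * t))‖ := by
    apply Summable.of_norm
    convert h_sum.mul_left (Real.Gamma s.re) using 2 with i
    · rfl
    simp_rw [← mul_assoc, mul_comm _ (a i), mul_assoc, norm_mul (a i), integral_const_mul]
    rw [← mul_div_assoc, mul_comm (Real.Gamma _), mul_div_assoc, norm_mul ‖a i‖, norm_norm]
    rcases hp i with hai | hpi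
    · simp only [hai, norm_zero, zero_mul]
    congr 1
    have := Real.integral_rpow_mul_exp_neg_mul_Ioi hs hpi
    simp_rw [← neg_mul (p i), one_div, inv_rpow hpi.le, ← div_eq_inv_mul] at this
    rw [norm_of_nonneg (integral_nonneg (fun _ => norm_nonneg _)), ← this]
    refine setIntegral_congr_fun measurableSet_Ioi (fun t ht => ?_)
    rw [norm_mul, norm_real, Real.norm_eq_abs, Real.abs_exp,
      norm_cpow_eq_rpow_re_of_pos ht, sub_re, one_re]
  have hint2 : Integrable
      (fun t : ℝ => ∑' i, (t:ℂ) ^ (s-1) * (a i * Real.exp (-p i * t)))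
      (MeasureTheory.volume.restrict (Ioi 0)) :=
    integrable_tsum_aux hint hsum2
  refine hint2.congr ?_
  filter_upwards [ae_restrict_mem measurableSet_Ioi] with t ht
  rw [tsum_mul_left, (hF t ht).tsum_eq]

/-- for f(z) = ∑_{m≥1} a_m e^{2πimz} with |a_m| ≤ C m^M and
Re(s) > M+1, the Mellin transform ∫_0^∞ f(it) t^{s-1} dt equals
Γ(s)(2π)^{-s} ∑ a_m m^{-s}, both sides converging absolutely. -/
theorem mellin_of_q_expansion
    (f : ℂ → ℂ) (a : ℕ → ℂ) (C M : ℝ) (hC : 0 < C) (hM : 0 < M)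
    (hb : ∀ m : ℕ, 1 ≤ m → ‖a m‖ ≤ C * (m : ℝ) ^ M)
    (hconv : ∀ z : ℂ, 0 < z.im →
      Summable (fun m : ℕ+ => ‖a m * Complex.exp (2 * Real.pi * Complex.I * (m : ℂ) * z)‖))
    (hf : ∀ z : ℂ, 0 < z.im →
      f z = ∑' m : ℕ+, a m * Complex.exp (2 * Real.pi * Complex.I * (m : ℂ) * z))
    (s : ℂ) (hs : M + 1 < s.re) :
    MeasureTheory.IntegrableOn
        (fun t : ℝ => f ((t : ℂ) * Complex.I) * ((t : ℂ)) ^ (s - 1)) (Set.Ioi 0)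
    ∧ Summable (fun m : ℕ+ => ‖a m * ((m : ℕ) : ℂ) ^ (-s)‖)
    ∧ (∫ t in Set.Ioi (0 : ℝ), f ((t : ℂ) * Complex.I) * ((t : ℂ)) ^ (s - 1))
        = Complex.Gamma s * ((2 * Real.pi : ℝ) : ℂ) ^ (-s) *
            ∑' m : ℕ+, a m * ((m : ℕ) : ℂ) ^ (-s) := by
  have hs0 : 0 < s.re := by linarith
  set σ := s.re with hσ
  have hr : M - σ < -1 := by linarith
  -- base summability over ℕ+
  have base : Summable (fun m : ℕ+ => ((m : ℕ) : ℝ) ^ (M - σ)) := by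
    have h0 : Summable (fun n : ℕ => (n : ℝ) ^ (M - σ)) := Real.summable_nat_rpow.2 hr
    exact h0.comp_injective (fun x y h => PNat.coe_injective h)
  have hmpos : ∀ m : ℕ+, (0:ℝ) < ((m : ℕ) : ℝ) := fun m => by
    exact_mod_cast m.pos
  -- the rewriting of the exponential
  have key : ∀ (m : ℕ+) (t : ℝ),
      Complex.exp (2 * Real.pi * Complex.I * (m : ℂ) * ((t:ℂ) * Complex.I))
        = ((Real.exp (-(2 * Real.pi * ((m : ℕ) : ℝ)) * t) : ℝ) : ℂ) := by
    intro m t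
    rw [Complex.ofReal_exp]
    congr 1
    push_cast
    rw [show (2 * (Real.pi:ℂ) * Complex.I * ((m:ℕ):ℂ) * ((t:ℂ) * Complex.I))
        = (2 * (Real.pi:ℂ) * ((m:ℕ):ℂ) * (t:ℂ)) * (Complex.I * Complex.I) by ring,
      Complex.I_mul_I]
    ring
  have hp : ∀ m : ℕ+, a m = 0 ∨ 0 < 2 * Real.pi * ((m : ℕ) : ℝ) := fun m =>
    Or.inr (by have := hmpos m; have := Real.pi_pos; positivity)
  have hF : ∀ t ∈ Set.Ioi (0:ℝ),
      HasSum (fun m : ℕ+ => a m * Real.exp (-(2 * Real.pi * ((m : ℕ) : ℝ)) * t))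
        (f ((t:ℂ) * Complex.I)) := by
    intro t ht
    have him : 0 < ((t:ℂ) * Complex.I).im := by simpa using ht
    have hsummable := (hconv _ him).of_norm
    have hhs := hsummable.hasSum
    rw [← hf _ him] at hhs
    have hfun : (fun m : ℕ+ => a m *
        Complex.exp (2 * Real.pi * Complex.I * (m : ℂ) * ((t:ℂ) * Complex.I)))
        = fun m : ℕ+ => a m * ((Real.exp (-(2 * Real.pi * ((m : ℕ) : ℝ)) * t) : ℝ) : ℂ) :=
      funext fun m => by rw [key]
    rwa [hfun] at hhs
  have hbound : ∀ m : ℕ+, ‖a m‖ / (2 * Real.pi * ((m : ℕ) : ℝ)) ^ σ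
      ≤ (C / (2 * Real.pi) ^ σ) * ((m : ℕ) : ℝ) ^ (M - σ) := by
    intro m
    have hm := hmpos m
    have h2π : (0:ℝ) < 2 * Real.pi := by positivity
    rw [Real.mul_rpow h2π.le hm.le, Real.rpow_sub hm, div_mul_div_comm]
    gcongr
    exact hb m m.pos
  have h_sum : Summable (fun m : ℕ+ => ‖a m‖ / (2 * Real.pi * ((m:ℕ):ℝ)) ^ σ) :=
    Summable.of_nonneg_of_le (fun m => by positivity) hbound (base.mul_left _)
  set c := Complex.Gamma s * ((2 * Real.pi : ℝ) : ℂ) ^ (-s) with hc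
  have hterm : ∀ m : ℕ+, Complex.Gamma s * a m / (((2 * Real.pi * ((m:ℕ):ℝ) : ℝ)) : ℂ) ^ s
      = c * (a m * ((m:ℕ):ℂ) ^ (-s)) := by
    intro m
    rw [hc, Complex.ofReal_mul, mul_cpow_ofReal_nonneg (by positivity) (hmpos m).le,
      Complex.cpow_neg, Complex.cpow_neg, div_eq_mul_inv, mul_inv]
    push_cast
    ring
  have hmain : HasSum (fun m : ℕ+ => c * (a m * ((m:ℕ):ℂ) ^ (-s)))
      (mellin (fun t : ℝ => f ((t:ℂ) * Complex.I)) s) := by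
    convert hasSum_mellin hp hs0 hF h_sum using 2 with m
    exact (hterm m).symm
  have h2ne : ((2 * Real.pi : ℝ) : ℂ) ≠ 0 := Complex.ofReal_ne_zero.2 (by positivity)
  have hcne : c ≠ 0 := mul_ne_zero (Complex.Gamma_ne_zero_of_re_pos hs0)
      (by
        intro h
        rw [Complex.cpow_eq_zero_iff] at h
        exact h2ne h.1)
  have hg : HasSum (fun m : ℕ+ => a m * ((m:ℕ):ℂ) ^ (-s))
      (c⁻¹ * mellin (fun t : ℝ => f ((t:ℂ) * Complex.I)) s) := by
    have h' := hmain.mul_left c⁻¹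
    simpa [← mul_assoc, inv_mul_cancel₀ hcne, one_mul] using h'
  refine ⟨?_, ?_, ?_⟩
  · have h' := mellin_integrable_aux hp hs0 hF h_sum
    exact h'.congr_fun (fun t ht => mul_comm _ _) measurableSet_Ioi
  · refine Summable.of_nonneg_of_le (fun m => norm_nonneg _) (fun m => ?_) (base.mul_left C)
    have hm := hmpos m
    rw [norm_mul]
    have hnorm : ‖((m:ℕ):ℂ) ^ (-s)‖ = ((m:ℕ):ℝ) ^ (-σ) := by
      rw [show ((m:ℕ):ℂ) = ((((m:ℕ):ℝ)):ℂ) by push_cast; ring,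
        Complex.norm_cpow_eq_rpow_re_of_pos hm, Complex.neg_re]
    rw [hnorm]
    calc ‖a m‖ * ((m:ℕ):ℝ) ^ (-σ)
        ≤ (C * ((m:ℕ):ℝ) ^ M) * ((m:ℕ):ℝ) ^ (-σ) := by
          gcongr
          exact hb m m.pos
      _ = C * ((m:ℕ):ℝ) ^ (M - σ) := by
          rw [mul_assoc, ← Real.rpow_add hm, ← sub_eq_add_neg]
  · have hmel : mellin (fun t : ℝ => f ((t:ℂ) * Complex.I)) s
        = ∫ t in Set.Ioi (0:ℝ), f ((t:ℂ) * Complex.I) * (t:ℂ) ^ (s-1) := by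
      simp_rw [mellin, smul_eq_mul, mul_comm]
    rw [hg.tsum_eq, ← mul_assoc, mul_inv_cancel₀ hcne, one_mul, hmel]
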